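/- Let G act linearly and isometrically on a Hilbert space M, let X = t₀ + σε with σ > 0, E(ε) = 0, E‖ε‖² = 1, and suppose m⋆ is a global minimizer of F(m) = E(inf_g ‖g·X − m‖²). Then, writing ν(m) = E(sup_g ⟨g·ε, m/‖m‖⟩) for m ≠ 0 and ν(0) = 0, one has d_Q([m⋆],[t₀])² ≤ 2σν(m⋆)(d_Q([m⋆],[t₀]) + ‖t₀‖), and consequently d_Q([m⋆],[t₀]) ≤ σν(m⋆) + sqrt(σ²ν(m⋆)² + 2‖t₀‖σν(m⋆)). -/

import Mathlib

open MeasureTheory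

lemma myIInf_sq {ι : Type*} [Nonempty ι] (f : ι → ℝ) (hf : ∀ i, 0 ≤ f i) :
    (⨅ i, f i) ^ 2 = ⨅ i, f i ^ 2 := by
  have hb : BddBelow (Set.range f) := ⟨0, by rintro x ⟨i, rfl⟩; exact hf i⟩
  have hb2 : BddBelow (Set.range fun i => f i ^ 2) :=
    ⟨0, by rintro x ⟨i, rfl⟩; exact sq_nonneg _⟩
  have h0 : 0 ≤ ⨅ i, f i := le_ciInf hf
  have h02 : 0 ≤ ⨅ i, f i ^ 2 := le_ciInf fun i => sq_nonneg _
  apply le_antisymm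
  · exact le_ciInf fun i => pow_le_pow_left₀ h0 (ciInf_le hb i) 2
  · have hs : Real.sqrt (⨅ i, f i ^ 2) ≤ ⨅ i, f i := by
      refine le_ciInf fun i => ?_
      have h := Real.sqrt_le_sqrt (ciInf_le hb2 i)
      rwa [Real.sqrt_sq (hf i)] at h
    calc ⨅ i, f i ^ 2 = Real.sqrt (⨅ i, f i ^ 2) ^ 2 := (Real.sq_sqrt h02).symm
    _ ≤ (⨅ i, f i) ^ 2 := pow_le_pow_left₀ (Real.sqrt_nonneg _) hs 2

lemma myIInf_comp_inv {G : Type*} [Group G] (f : G → ℝ) :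
    (⨅ g : G, f g⁻¹) = ⨅ g : G, f g := by
  rw [iInf, iInf]
  congr 1
  ext x
  constructor
  · rintro ⟨g, rfl⟩; exact ⟨g⁻¹, rfl⟩
  · rintro ⟨g, rfl⟩; exact ⟨g⁻¹, by simp⟩

/-- Upper bound of the consistency bias: if `m⋆` globally minimizes the
quotient variance `F`, then with `ν(m) = E(sup_g ⟨g•ε, m/‖m‖⟩)` (and
`ν(0) = 0`), `d_Q([m⋆],[t₀])² ≤ 2σν(m⋆)(d_Q([m⋆],[t₀]) + ‖t₀‖)` and hence
`d_Q([m⋆],[t₀]) ≤ σν(m⋆) + √(σ²ν(m⋆)² + 2‖t₀‖σν(m⋆))`. -/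
theorem stmt14 {M G Ω : Type*} [NormedAddCommGroup M] [InnerProductSpace ℝ M]
    [CompleteSpace M] [Group G] [MulAction G M] [MeasurableSpace Ω]
    (μ : Measure Ω) [IsProbabilityMeasure μ]
    (hlin : ∀ g : G, IsLinearMap ℝ fun x : M => g • x)
    (hiso : ∀ (g : G) (x : M), ‖g • x‖ = ‖x‖)
    (ε : Ω → M) (t₀ : M) (σ : ℝ) (hσ : 0 < σ)
    (hεint : Integrable ε μ) (hεmean : ∫ ω, ε ω ∂μ = 0)
    (hε2 : (∫ ω, ‖ε ω‖ ^ 2 ∂μ) = 1)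
    (hε2int : Integrable (fun ω => ‖ε ω‖ ^ 2) μ)
    (X : Ω → M) (hX : ∀ ω, X ω = t₀ + σ • ε ω)
    (hbdd : ∀ (ω) (m : M), BddAbove
      (Set.range fun g : G => (inner ℝ (g • ε ω) m : ℝ)))
    (hsup : ∀ m : M, Integrable
      (fun ω => ⨆ g : G, (inner ℝ (g • ε ω) m : ℝ)) μ)
    (ν : M → ℝ) (hν0 : ν 0 = 0)
    (hν : ∀ m : M, m ≠ 0 →
      ν m = ∫ ω, ⨆ g : G, (inner ℝ (g • ε ω) (‖m‖⁻¹ • m) : ℝ) ∂μ)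
    (m₀ : M)
    (hmin : ∀ m : M, (∫ ω, ⨅ g : G, ‖g • X ω - m₀‖ ^ 2 ∂μ)
      ≤ ∫ ω, ⨅ g : G, ‖g • X ω - m‖ ^ 2 ∂μ) :
    (⨅ g : G, ‖g • m₀ - t₀‖) ^ 2
        ≤ 2 * σ * ν m₀ * ((⨅ g : G, ‖g • m₀ - t₀‖) + ‖t₀‖) ∧
    (⨅ g : G, ‖g • m₀ - t₀‖)
        ≤ σ * ν m₀ + Real.sqrt (σ ^ 2 * ν m₀ ^ 2 + 2 * ‖t₀‖ * σ * ν m₀) := by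
  haveI : Nonempty G := ⟨1⟩
  simp only [hX] at hmin
  set d := ⨅ g : G, ‖g • m₀ - t₀‖ with hd
  have hd0 : 0 ≤ d := Real.iInf_nonneg fun g => norm_nonneg _
  -- d in terms of the other quotient distance
  have hd_eq : d = ⨅ g : G, ‖g • t₀ - m₀‖ := by
    have h1 : ∀ g : G, ‖g • m₀ - t₀‖ = ‖g⁻¹ • t₀ - m₀‖ := by
      intro g
      have h2 : g⁻¹ • (g • m₀ - t₀) = m₀ - g⁻¹ • t₀ := by
        rw [(hlin g⁻¹).map_sub, inv_smul_smul]
      calc ‖g • m₀ - t₀‖ = ‖g⁻¹ • (g • m₀ - t₀)‖ := (hiso g⁻¹ _).symm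
      _ = ‖m₀ - g⁻¹ • t₀‖ := by rw [h2]
      _ = ‖g⁻¹ • t₀ - m₀‖ := norm_sub_rev _ _
    rw [hd]
    simp only [h1]
    exact myIInf_comp_inv (fun g => ‖g • t₀ - m₀‖)
  have hd2 : d ^ 2 = ⨅ g : G, ‖g • t₀ - m₀‖ ^ 2 := by
    rw [hd_eq]; exact myIInf_sq _ fun g => norm_nonneg _
  have hbd2 : BddBelow (Set.range fun g : G => ‖g • t₀ - m₀‖ ^ 2) :=
    ⟨0, by rintro x ⟨g, rfl⟩; exact sq_nonneg _⟩
  -- the normalized direction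
  set u : M := ‖m₀‖⁻¹ • m₀ with hu
  have hmu : ∀ v : M, (inner ℝ v m₀ : ℝ) = ‖m₀‖ * (inner ℝ v u : ℝ) := by
    intro v
    by_cases h : m₀ = 0
    · simp [h, hu]
    · have h2 : (‖m₀‖ : ℝ) • u = m₀ := smul_inv_smul₀ (norm_ne_zero_iff.2 h) m₀
      rw [← h2, real_inner_smul_right, h2]
  set U : Ω → ℝ := fun ω => ⨆ g : G, (inner ℝ (g • ε ω) u : ℝ) with hU
  have hUint : Integrable U μ := hsup u
  have hUb : ∀ (ω) (g : G), (inner ℝ (g • ε ω) m₀ : ℝ) ≤ ‖m₀‖ * U ω := fun ω g => by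
    rw [hmu]
    exact mul_le_mul_of_nonneg_left (le_ciSup (hbdd ω u) g) (norm_nonneg _)
  -- pointwise lower bound
  have hlow : ∀ ω, 2 * σ * (inner ℝ t₀ (ε ω) : ℝ) + σ ^ 2 * ‖ε ω‖ ^ 2 + d ^ 2
      - 2 * σ * ‖m₀‖ * U ω ≤ ⨅ g : G, ‖g • (t₀ + σ • ε ω) - m₀‖ ^ 2 := by
    intro ω
    refine le_ciInf fun g => ?_
    have hg : g • (t₀ + σ • ε ω) = g • t₀ + σ • (g • ε ω) := by
      rw [(hlin g).map_add, (hlin g).map_smul]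
    have hexp : ‖g • (t₀ + σ • ε ω) - m₀‖ ^ 2
        = ‖t₀ + σ • ε ω‖ ^ 2
          - 2 * ((inner ℝ (g • t₀) m₀ : ℝ) + σ * (inner ℝ (g • ε ω) m₀ : ℝ))
          + ‖m₀‖ ^ 2 := by
      rw [norm_sub_sq_real, hiso, hg, inner_add_left, real_inner_smul_left]
    have hX2 : ‖t₀ + σ • ε ω‖ ^ 2
        = ‖t₀‖ ^ 2 + 2 * σ * (inner ℝ t₀ (ε ω) : ℝ) + σ ^ 2 * ‖ε ω‖ ^ 2 := by
      rw [norm_add_sq_real, real_inner_smul_right, norm_smul, Real.norm_eq_abs,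
        mul_pow, sq_abs]
      ring
    have hgt : ‖g • t₀ - m₀‖ ^ 2
        = ‖t₀‖ ^ 2 - 2 * (inner ℝ (g • t₀) m₀ : ℝ) + ‖m₀‖ ^ 2 := by
      rw [norm_sub_sq_real, hiso]
    have h1 : d ^ 2 ≤ ‖g • t₀ - m₀‖ ^ 2 := hd2 ▸ ciInf_le hbd2 g
    have h2 : (inner ℝ (g • ε ω) m₀ : ℝ) ≤ ‖m₀‖ * U ω := hUb ω g
    nlinarith [mul_le_mul_of_nonneg_left h2 (by positivity : (0:ℝ) ≤ 2 * σ)]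
  -- integrability of the h-function
  have hinner_int : Integrable (fun ω => (inner ℝ t₀ (ε ω) : ℝ)) μ :=
    hεint.const_inner t₀
  have hh_int : Integrable (fun ω => 2 * σ * (inner ℝ t₀ (ε ω) : ℝ)
      + σ ^ 2 * ‖ε ω‖ ^ 2 + d ^ 2 - 2 * σ * ‖m₀‖ * U ω) μ := by
    exact (((hinner_int.const_mul _).add (hε2int.const_mul _)).add
      (integrable_const _)).sub (hUint.const_mul _)
  -- integral of the h-function
  have hh_val : (∫ ω, (2 * σ * (inner ℝ t₀ (ε ω) : ℝ) + σ ^ 2 * ‖ε ω‖ ^ 2 + d ^ 2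
      - 2 * σ * ‖m₀‖ * U ω) ∂μ)
      = σ ^ 2 + d ^ 2 - 2 * σ * ‖m₀‖ * (∫ ω, U ω ∂μ) := by
    have hA1 : Integrable (fun ω => 2 * σ * (inner ℝ t₀ (ε ω) : ℝ)) μ :=
      hinner_int.const_mul _
    have hA2 : Integrable (fun ω => σ ^ 2 * ‖ε ω‖ ^ 2) μ := hε2int.const_mul _
    have hA12 : Integrable
        (fun ω => 2 * σ * (inner ℝ t₀ (ε ω) : ℝ) + σ ^ 2 * ‖ε ω‖ ^ 2) μ :=
      hA1.add hA2
    have hA : Integrable (fun ω => 2 * σ * (inner ℝ t₀ (ε ω) : ℝ)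
        + σ ^ 2 * ‖ε ω‖ ^ 2 + d ^ 2) μ := hA12.add (integrable_const _)
    have hB : Integrable (fun ω => 2 * σ * ‖m₀‖ * U ω) μ := hUint.const_mul _
    rw [integral_sub hA hB, integral_add hA12 (integrable_const _),
      integral_add hA1 hA2,
      integral_const_mul, integral_const_mul, integral_const_mul,
      integral_inner hεint, hεmean, inner_zero_right, hε2, integral_const]
    simp
  -- measurability of the infimum integrand
  set r : M → ℝ := fun x => ⨅ g : G, ‖g • x - m₀‖ with hr
  have hrbdd : ∀ x : M, BddBelow (Set.range fun g : G => ‖g • x - m₀‖) :=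
    fun x => ⟨0, by rintro y ⟨g, rfl⟩; exact norm_nonneg _⟩
  have hrle : ∀ x y : M, r x ≤ r y + ‖x - y‖ := by
    intro x y
    rw [← sub_le_iff_le_add]
    refine le_ciInf fun g => ?_
    rw [sub_le_iff_le_add]
    have h1 : r x ≤ ‖g • x - m₀‖ := ciInf_le (hrbdd x) g
    have h2 : ‖g • x - m₀‖ ≤ ‖g • x - g • y‖ + ‖g • y - m₀‖ :=
      norm_sub_le_norm_sub_add_norm_sub _ _ _
    have h3 : ‖g • x - g • y‖ = ‖x - y‖ := by
      rw [← (hlin g).map_sub, hiso]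
    linarith
  have hrlip : LipschitzWith 1 r := by
    apply LipschitzWith.of_dist_le_mul
    intro x y
    rw [Real.dist_eq, NNReal.coe_one, one_mul, dist_eq_norm, abs_sub_le_iff]
    constructor
    · linarith [hrle x y]
    · linarith [hrle y x, (norm_sub_rev x y)]
  have hrEq : ∀ x : M, (⨅ g : G, ‖g • x - m₀‖ ^ 2) = r x ^ 2 :=
    fun x => (myIInf_sq _ fun g => norm_nonneg _).symm
  have hXm : AEStronglyMeasurable (fun ω => t₀ + σ • ε ω) μ :=
    aestronglyMeasurable_const.add (hεint.aestronglyMeasurable.const_smul σ)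
  have hmeas : AEStronglyMeasurable
      (fun ω => ⨅ g : G, ‖g • (t₀ + σ • ε ω) - m₀‖ ^ 2) μ := by
    simp only [hrEq]
    exact (hrlip.continuous.pow 2).comp_aestronglyMeasurable hXm
  have hbound_int : Integrable
      (fun ω => 2 * ‖t₀ - m₀‖ ^ 2 + 2 * σ ^ 2 * ‖ε ω‖ ^ 2) μ :=
    (integrable_const _).add (hε2int.const_mul _)
  have hinf_int : Integrable
      (fun ω => ⨅ g : G, ‖g • (t₀ + σ • ε ω) - m₀‖ ^ 2) μ := by
    refine hbound_int.mono' hmeas (Filter.Eventually.of_forall fun ω => ?_)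
    have h1 : 0 ≤ ⨅ g : G, ‖g • (t₀ + σ • ε ω) - m₀‖ ^ 2 :=
      Real.iInf_nonneg fun g => sq_nonneg _
    rw [Real.norm_of_nonneg h1]
    have h2 : (⨅ g : G, ‖g • (t₀ + σ • ε ω) - m₀‖ ^ 2)
        ≤ ‖(1 : G) • (t₀ + σ • ε ω) - m₀‖ ^ 2 :=
      ciInf_le ⟨0, by rintro y ⟨g, rfl⟩; exact sq_nonneg _⟩ 1
    have h3 : ‖(1 : G) • (t₀ + σ • ε ω) - m₀‖ = ‖(t₀ - m₀) + σ • ε ω‖ := by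
      rw [one_smul]; congr 1; abel
    have h4 : ‖(t₀ - m₀) + σ • ε ω‖ ≤ ‖t₀ - m₀‖ + ‖σ • ε ω‖ := norm_add_le _ _
    have h5 : ‖σ • ε ω‖ = σ * ‖ε ω‖ := by
      rw [norm_smul, Real.norm_eq_abs, abs_of_pos hσ]
    nlinarith [norm_nonneg (t₀ - m₀), norm_nonneg (ε ω),
      norm_nonneg ((t₀ - m₀) + σ • ε ω), sq_nonneg (‖t₀ - m₀‖ - σ * ‖ε ω‖)]
  -- upper bound on F(t₀)
  have hup : (∫ ω, ⨅ g : G, ‖g • (t₀ + σ • ε ω) - t₀‖ ^ 2 ∂μ) ≤ σ ^ 2 := by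
    have h1 : (∫ ω, ⨅ g : G, ‖g • (t₀ + σ • ε ω) - t₀‖ ^ 2 ∂μ)
        ≤ ∫ ω, σ ^ 2 * ‖ε ω‖ ^ 2 ∂μ := by
      refine integral_mono_of_nonneg
        (Filter.Eventually.of_forall fun ω => Real.iInf_nonneg fun g => sq_nonneg _)
        (hε2int.const_mul _) (Filter.Eventually.of_forall fun ω => ?_)
      have h2 : (⨅ g : G, ‖g • (t₀ + σ • ε ω) - t₀‖ ^ 2)
          ≤ ‖(1 : G) • (t₀ + σ • ε ω) - t₀‖ ^ 2 :=
        ciInf_le ⟨0, by rintro y ⟨g, rfl⟩; exact sq_nonneg _⟩ 1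
      have h3 : ‖(1 : G) • (t₀ + σ • ε ω) - t₀‖ = σ * ‖ε ω‖ := by
        rw [one_smul, add_sub_cancel_left, norm_smul, Real.norm_eq_abs,
          abs_of_pos hσ]
      rw [h3] at h2
      calc (⨅ g : G, ‖g • (t₀ + σ • ε ω) - t₀‖ ^ 2) ≤ (σ * ‖ε ω‖) ^ 2 := h2
      _ = σ ^ 2 * ‖ε ω‖ ^ 2 := by ring
    rw [integral_const_mul, hε2, mul_one] at h1
    exact h1
  -- the key inequality d² ≤ 2σ‖m₀‖K
  have key : d ^ 2 ≤ 2 * σ * ‖m₀‖ * (∫ ω, U ω ∂μ) := by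
    have h1 : (∫ ω, (2 * σ * (inner ℝ t₀ (ε ω) : ℝ) + σ ^ 2 * ‖ε ω‖ ^ 2 + d ^ 2
        - 2 * σ * ‖m₀‖ * U ω) ∂μ)
        ≤ ∫ ω, ⨅ g : G, ‖g • (t₀ + σ • ε ω) - m₀‖ ^ 2 ∂μ :=
      integral_mono hh_int hinf_int fun ω => hlow ω
    rw [hh_val] at h1
    have h2 := hmin t₀
    linarith
  -- relate to ν
  have main : 0 ≤ ν m₀ ∧ d ^ 2 ≤ 2 * σ * ν m₀ * (d + ‖t₀‖) := by
    by_cases hm0 : m₀ = 0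
    · have hν' : ν m₀ = 0 := by rw [hm0, hν0]
      have hdz : d ^ 2 ≤ 0 := by
        have : ‖m₀‖ = 0 := by rw [hm0, norm_zero]
        rw [this] at key; linarith
      constructor
      · rw [hν']
      · rw [hν']; nlinarith
    · have hK : ν m₀ = ∫ ω, U ω ∂μ := hν m₀ hm0
      have hν_nonneg : 0 ≤ ν m₀ := by
        rw [hK]
        have hiu : Integrable (fun ω => (inner ℝ (ε ω) u : ℝ)) μ := by
          have h : Integrable (fun ω => (inner ℝ u (ε ω) : ℝ)) μ :=
            hεint.const_inner u
          have he : (fun ω => (inner ℝ u (ε ω) : ℝ))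
              = fun ω => (inner ℝ (ε ω) u : ℝ) := by
            funext ω; exact real_inner_comm (ε ω) u
          rwa [he] at h
        have h0 : (∫ ω, (inner ℝ (ε ω) u : ℝ) ∂μ) = 0 := by
          have he : (fun ω => (inner ℝ (ε ω) u : ℝ))
              = fun ω => (inner ℝ u (ε ω) : ℝ) := by
            funext ω; exact real_inner_comm u (ε ω)
          rw [he, integral_inner hεint, hεmean, inner_zero_right]
        have h1 : (∫ ω, (inner ℝ (ε ω) u : ℝ) ∂μ) ≤ ∫ ω, U ω ∂μ := by
          refine integral_mono hiu hUint fun ω => ?_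
          have h2 := le_ciSup (hbdd ω u) (1 : G)
          rw [one_smul] at h2
          exact h2
        linarith
      have hnorm_le : ‖m₀‖ ≤ d + ‖t₀‖ := by
        have h1 : ∀ g : G, ‖m₀‖ - ‖t₀‖ ≤ ‖g • m₀ - t₀‖ := fun g => by
          have := norm_sub_norm_le (g • m₀) t₀
          rwa [hiso] at this
        have h2 : ‖m₀‖ - ‖t₀‖ ≤ d := le_ciInf h1
        linarith
      refine ⟨hν_nonneg, ?_⟩
      rw [← hK] at key
      nlinarith [mul_le_mul_of_nonneg_left hnorm_le
        (by positivity : (0:ℝ) ≤ 2 * σ * ν m₀)]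
  obtain ⟨hνn, hmain⟩ := main
  refine ⟨hmain, ?_⟩
  have h1 : (d - σ * ν m₀) ^ 2 ≤ σ ^ 2 * ν m₀ ^ 2 + 2 * ‖t₀‖ * σ * ν m₀ := by
    nlinarith
  have h2 : d - σ * ν m₀ ≤ Real.sqrt (σ ^ 2 * ν m₀ ^ 2 + 2 * ‖t₀‖ * σ * ν m₀) := by
    calc d - σ * ν m₀ ≤ |d - σ * ν m₀| := le_abs_self _
    _ = Real.sqrt ((d - σ * ν m₀) ^ 2) := (Real.sqrt_sq_eq_abs _).symm
    _ ≤ _ := Real.sqrt_le_sqrt h1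
  linarith
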